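/- Let m, N₀, H₀, r₀ be real numbers with m > 0, N₀ > 0, r₀ > 0, H₀ ≥ 2·N₀/r₀, and 4·N₀ = 4·m·H₀ + r₀²·N₀·H₀². Then N₀² ≤ 1 − 2·m/r₀. -/

import Mathlib

/-- First Schwarzschild-type inequality: from `H₀ ≥ 2N₀/r₀` and the
Gauß–Bonnet constraint `4N₀ = 4mH₀ + r₀²N₀H₀²` with `m, N₀, r₀ > 0` one
deduces `N₀² ≤ 1 − 2m/r₀`. -/
theorem schwarzschild_inequality_one
    (m N₀ H₀ r₀ : ℝ)
    (hm : m > 0) (hN₀ : N₀ > 0) (hr₀ : r₀ > 0)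
    (hH : H₀ ≥ 2 * N₀ / r₀)
    (hGB : 4 * N₀ = 4 * m * H₀ + r₀ ^ 2 * N₀ * H₀ ^ 2) :
    N₀ ^ 2 ≤ 1 - 2 * m / r₀ := by
  have hx : H₀ * r₀ ≥ 2 * N₀ := by
    rw [ge_iff_le, div_le_iff₀ hr₀] at hH
    linarith
  have hH0 : H₀ > 0 := lt_of_lt_of_le (by positivity : (0:ℝ) < 2 * N₀ / r₀) hH
  have key : (H₀ * r₀ - 2 * N₀) * (N₀ * (H₀ * r₀) + 2) ≥ 0 := by
    have h2 : N₀ * (H₀ * r₀) + 2 ≥ 0 := by positivity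
    nlinarith
  rw [← sub_nonneg]
  have heq : 1 - 2 * m / r₀ - N₀ ^ 2 = (r₀ - 2 * m - N₀ ^ 2 * r₀) / r₀ := by
    field_simp
  rw [heq]
  apply div_nonneg _ hr₀.le
  nlinarith [mul_pos hH0 hr₀]
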